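/- arXiv:2504.07506 — 2 statements merged into one kernel-verified Lean document; each statement's English description precedes it below -/
import Mathlib

section
/- Let h : (0,∞) → ℝ be defined by h(t) = ½t² − ½ D₂ ρ t − D₁ β ρ^{r(1−γ_r)} t^{rγ_r}, where D₁, D₂, β, ρ > 0 and rγ_r > 2. If βρ^{r−2} < c*(N,r) := (1/(2D₁(rγ_r−1))) · ((rγ_r−2)/((rγ_r−1)D₂))^{rγ_r−2}, then there exist 0 < R₀ < R₁ such that h(R₀) = h(R₁) = 0 and h(t) > 0 if and only if t ∈ (R₀, R₁). -/
set_option maxHeartbeats 1000000 in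
/-- Geometry of `h(t) = ½t² − ½D₂ρt − D₁βρ^{r(1−γ)}t^{rγ}`: if
`βρ^{r−2} < c*(N,r)`, there are `0 < R₀ < R₁` with `h(R₀) = h(R₁) = 0` and
`h > 0` exactly on `(R₀, R₁)`. -/
theorem stmt5 (D₁ D₂ β ρ r γ : ℝ) (hD₁ : 0 < D₁) (hD₂ : 0 < D₂) (hβ : 0 < β)
    (hρ : 0 < ρ) (hr : 2 < r) (hrγ : 2 < r * γ)
    (hmass : β * ρ ^ (r - 2) <
      1 / (2 * D₁ * (r * γ - 1)) * ((r * γ - 2) / ((r * γ - 1) * D₂)) ^ (r * γ - 2)) :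
    ∃ R₀ R₁ : ℝ, 0 < R₀ ∧ R₀ < R₁ ∧
      (fun t : ℝ => (1 / 2) * t ^ 2 - (1 / 2) * D₂ * ρ * t -
          D₁ * β * ρ ^ (r * (1 - γ)) * t ^ (r * γ)) R₀ = 0 ∧
      (fun t : ℝ => (1 / 2) * t ^ 2 - (1 / 2) * D₂ * ρ * t -
          D₁ * β * ρ ^ (r * (1 - γ)) * t ^ (r * γ)) R₁ = 0 ∧
      ∀ t : ℝ, 0 < t →
        (0 < (1 / 2) * t ^ 2 - (1 / 2) * D₂ * ρ * t -
            D₁ * β * ρ ^ (r * (1 - γ)) * t ^ (r * γ) ↔ R₀ < t ∧ t < R₁) := by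
  obtain ⟨p, hpdef⟩ : ∃ p : ℝ, p = r * γ := ⟨_, rfl⟩
  obtain ⟨A, hAdef⟩ : ∃ A : ℝ, A = D₁ * β * ρ ^ (r * (1 - γ)) := ⟨_, rfl⟩
  obtain ⟨g, hgapp⟩ : ∃ g : ℝ → ℝ,
      ∀ t, g t = (1/2)*t - (1/2)*D₂*ρ - A * t ^ (p-1) := ⟨_, fun t => rfl⟩
  rw [← hpdef] at hmass hrγ
  have hp2 : (0:ℝ) < p - 2 := by linarith
  have hp1 : (0:ℝ) < p - 1 := by linarith
  have hp2ne : (p:ℝ) - 2 ≠ 0 := hp2.ne'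
  have hp1ne : (p:ℝ) - 1 ≠ 0 := hp1.ne'
  have hA0 : 0 < A := by rw [hAdef]; positivity
  -- strict concavity consequence
  have keyB : ∀ x z y : ℝ, 0 ≤ x → x < z → z < y → 0 ≤ g x → 0 ≤ g y → 0 < g z := by
    intro x z y hx hxz hzy hgx hgy
    have hxy : x < y := hxz.trans hzy
    obtain ⟨a, b, ha, hb, hab, habz⟩ := (Convex.mem_Ioo hxy).1 ⟨hxz, hzy⟩
    have hy : (0:ℝ) ≤ y := hx.trans hxy.le
    have hcvx := (strictConvexOn_rpow (show (1:ℝ) < p - 1 by linarith)).2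
      (Set.mem_Ici.mpr hx) (Set.mem_Ici.mpr hy) hxy.ne ha hb hab
    simp only [smul_eq_mul] at hcvx
    have hmul := mul_lt_mul_of_pos_left hcvx hA0
    rw [← habz, hgapp]
    rw [hgapp] at hgx hgy
    have e : a*((1/2)*D₂*ρ) + b*((1/2)*D₂*ρ) = (1/2)*D₂*ρ := by
      have h9 : (a+b) * ((1/2)*D₂*ρ) = (1/2)*D₂*ρ := by rw [hab, one_mul]
      linarith [h9]
    linarith [mul_nonneg ha.le hgx, mul_nonneg hb.le hgy, hmul, e]
  -- the point where g is positive
  obtain ⟨s, hsdef⟩ : ∃ s : ℝ, s = (p-1)*D₂*ρ/(p-2) := ⟨_, rfl⟩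
  have hs0 : 0 < s := by
    rw [hsdef]; exact div_pos (mul_pos (mul_pos hp1 hD₂) hρ) hp2
  have hsρ : D₂ * ρ < s := by
    rw [hsdef, lt_div_iff₀ hp2]; nlinarith [mul_pos hD₂ hρ]
  have hsp : 0 < s ^ (p-2) := Real.rpow_pos_of_pos hs0 _
  have hmass' : β * ρ^(r-2) < 1/(2*D₁*(p-1)) * (ρ^(p-2)/s^(p-2)) := by
    have h1 : (p-2)/((p-1)*D₂) = ρ/s := by
      rw [hsdef]
      field_simp
    rwa [h1, Real.div_rpow hρ.le hs0.le] at hmass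
  have hAs : A * s^(p-2) < 1/(2*(p-1)) := by
    have h2 : A * s^(p-2) = (β*ρ^(r-2)) * (D₁ * ρ^(2-p) * s^(p-2)) := by
      rw [hAdef, show r*(1-γ) = (r-2)+(2-p) by rw [hpdef]; ring, Real.rpow_add hρ]
      ring
    have h3 : (0:ℝ) < D₁ * ρ^(2-p) * s^(p-2) := by positivity
    calc A * s^(p-2) = (β*ρ^(r-2)) * (D₁ * ρ^(2-p) * s^(p-2)) := h2
      _ < (1/(2*D₁*(p-1)) * (ρ^(p-2)/s^(p-2))) * (D₁ * ρ^(2-p) * s^(p-2)) :=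
          mul_lt_mul_of_pos_right hmass' h3
      _ = 1/(2*(p-1)) * (ρ^(2-p) * ρ^(p-2)) := by
          field_simp
      _ = 1/(2*(p-1)) := by
          rw [← Real.rpow_add hρ, show (2-p)+(p-2) = (0:ℝ) by ring, Real.rpow_zero, mul_one]
  have hgs : 0 < g s := by
    have hss : s^(p-1) = s^(p-2) * s := by
      have h := Real.rpow_add_one hs0.ne' (p-2)
      rwa [show p-2+1 = p-1 by ring] at h
    have h3 : A * s^(p-1) < 1/(2*(p-1)) * s := by
      rw [hss, ← mul_assoc]
      exact mul_lt_mul_of_pos_right hAs hs0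
    have h4 : 1/(2*(p-1)) * s = (1/2)*s - (1/2)*D₂*ρ := by
      rw [hsdef]; field_simp; ring
    rw [hgapp]; linarith
  -- low point
  obtain ⟨t₀, ht₀def⟩ : ∃ t₀ : ℝ, t₀ = D₂*ρ/2 := ⟨_, rfl⟩
  have ht₀0 : 0 < t₀ := by rw [ht₀def]; positivity
  have ht₀s : t₀ < s := by
    have := mul_pos hD₂ hρ; rw [ht₀def]; linarith
  have hgt₀ : g t₀ < 0 := by
    have h := mul_nonneg hA0.le (Real.rpow_nonneg ht₀0.le (p-1))
    rw [hgapp]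
    have := mul_pos hD₂ hρ
    rw [ht₀def] at *
    linarith
  -- high point
  obtain ⟨t₁, ht₁def⟩ : ∃ t₁ : ℝ, t₁ = max (s+1) ((1/(2*A))^((p-2)⁻¹) + 1) := ⟨_, rfl⟩
  have hst₁ : s < t₁ := by
    rw [ht₁def]; exact lt_of_lt_of_le (lt_add_one s) (le_max_left _ _)
  have ht₁0 : 0 < t₁ := hs0.trans hst₁
  have hbase : (0:ℝ) ≤ (1/(2*A))^((p-2)⁻¹) := Real.rpow_nonneg (by positivity) _
  have hpow : 1/(2*A) ≤ t₁^(p-2) := by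
    have h6 : (1/(2*A))^((p-2)⁻¹) ≤ t₁ := by
      rw [ht₁def]
      exact le_trans (le_add_of_nonneg_right zero_le_one) (le_max_right _ _)
    calc 1/(2*A) = ((1/(2*A))^((p-2)⁻¹))^(p-2) := by
          rw [← Real.rpow_mul (by positivity), inv_mul_cancel₀ hp2ne, Real.rpow_one]
      _ ≤ t₁^(p-2) := Real.rpow_le_rpow hbase h6 hp2.le
  have hgt₁ : g t₁ < 0 := by
    have h7 : t₁^(p-1) = t₁^(p-2) * t₁ := by
      have h := Real.rpow_add_one ht₁0.ne' (p-2)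
      rwa [show p-2+1 = p-1 by ring] at h
    have h8 : 1/2 ≤ A * t₁^(p-2) := by
      have h := mul_le_mul_of_nonneg_left hpow hA0.le
      rw [show A*(1/(2*A)) = 1/2 by field_simp] at h
      exact h
    rw [hgapp, h7]
    nlinarith [mul_le_mul_of_nonneg_right h8 ht₁0.le, mul_pos hD₂ hρ]
  -- continuity
  have hgc : Continuous g := by
    have hge : g = fun t => (1/2)*t - (1/2)*D₂*ρ - A * t ^ (p-1) := funext hgapp
    have hcp : Continuous fun t : ℝ => t ^ (p-1) :=
      continuous_iff_continuousAt.2 fun x =>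
        Real.continuousAt_rpow_const x _ (Or.inr (by linarith))
    rw [hge]
    exact ((continuous_const.mul continuous_id).sub continuous_const).sub
      (continuous_const.mul hcp)
  -- IVT twice
  obtain ⟨R₀, hR₀mem, hgR₀⟩ := intermediate_value_Icc ht₀s.le hgc.continuousOn
    (Set.mem_Icc.mpr ⟨hgt₀.le, hgs.le⟩)
  obtain ⟨R₁, hR₁mem, hgR₁⟩ := intermediate_value_Icc' hst₁.le hgc.continuousOn
    (Set.mem_Icc.mpr ⟨hgt₁.le, hgs.le⟩)
  have hR₀0 : 0 < R₀ := lt_of_lt_of_le ht₀0 hR₀mem.1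
  have hR₀s : R₀ < s := lt_of_le_of_ne hR₀mem.2 (by intro h; rw [h] at hgR₀; linarith)
  have hsR₁ : s < R₁ := lt_of_le_of_ne hR₁mem.1 (by intro h; rw [← h] at hgR₁; linarith)
  have hR₀R₁ : R₀ < R₁ := hR₀s.trans hsR₁
  -- factorization
  have hprod : ∀ t : ℝ, 0 < t →
      (1 / 2) * t ^ 2 - (1 / 2) * D₂ * ρ * t -
        D₁ * β * ρ ^ (r * (1 - γ)) * t ^ (r * γ) = t * g t := by
    intro t ht
    rw [← hpdef, ← hAdef, hgapp]
    have hpow : t^p = t^(p-1)*t := by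
      rw [← Real.rpow_add_one ht.ne', show p-1+1 = p by ring]
    rw [hpow]; ring
  refine ⟨R₀, R₁, hR₀0, hR₀R₁, ?_, ?_, ?_⟩
  · show (1 / 2) * R₀ ^ 2 - (1 / 2) * D₂ * ρ * R₀ -
        D₁ * β * ρ ^ (r * (1 - γ)) * R₀ ^ (r * γ) = 0
    rw [hprod R₀ hR₀0, hgR₀, mul_zero]
  · show (1 / 2) * R₁ ^ 2 - (1 / 2) * D₂ * ρ * R₁ -
        D₁ * β * ρ ^ (r * (1 - γ)) * R₁ ^ (r * γ) = 0
    rw [hprod R₁ (hR₀0.trans hR₀R₁), hgR₁, mul_zero]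
  · intro t ht
    rw [hprod t ht]
    constructor
    · intro hpos
      have hgt : 0 < g t := by
        by_contra h
        push_neg at h
        nlinarith
      constructor
      · by_contra hle
        push_neg at hle
        rcases eq_or_lt_of_le hle with heq | hlt
        · rw [heq] at hgt; linarith
        · have := keyB t R₀ s ht.le hlt hR₀s hgt.le hgs.le
          linarith
      · by_contra hle
        push_neg at hle
        rcases eq_or_lt_of_le hle with heq | hlt
        · rw [← heq] at hgt; linarith
        · have := keyB s R₁ t hs0.le hsR₁ hlt hgs.le hgt.le
          linarith
    · rintro ⟨h1, h2⟩
      exact mul_pos ht (keyB R₀ t R₁ hR₀0.le h1 h2 (le_of_eq hgR₀.symm) (le_of_eq hgR₁.symm))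
end

section
/- Suppose the function ρ ↦ m(ρ) satisfies m(θρ) < θ² m(ρ) for all θ > 1 whenever m(ρ) is attained, and suppose for ρ ≥ ρ₁ > 0 that (ρ₁²/ρ²)·m(ρ) ≤ m(ρ₁). Then m((ρ² + ρ₁²)^{1/2}) < m(ρ) + m(ρ₁). -/
/-- Strict sub-additivity: if `m(θρ) < θ²m(ρ)` for all `θ > 1` and
`(ρ₁²/ρ²)m(ρ) ≤ m(ρ₁)` for `ρ ≥ ρ₁ > 0`, then
`m(√(ρ² + ρ₁²)) < m(ρ) + m(ρ₁)`. -/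
theorem stmt10 (m : ℝ → ℝ) (ρ ρ₁ : ℝ) (hρ₁ : 0 < ρ₁) (hρρ₁ : ρ₁ ≤ ρ)
    (hscal : ∀ θ : ℝ, 1 < θ → m (θ * ρ) < θ ^ 2 * m ρ)
    (hcomp : ρ₁ ^ 2 / ρ ^ 2 * m ρ ≤ m ρ₁) :
    m ((ρ ^ 2 + ρ₁ ^ 2) ^ ((1 : ℝ) / 2)) < m ρ + m ρ₁ := by
  have hρ : 0 < ρ := lt_of_lt_of_le hρ₁ hρρ₁
  have hrpow : (ρ ^ 2 + ρ₁ ^ 2) ^ ((1 : ℝ) / 2) = Real.sqrt (ρ ^ 2 + ρ₁ ^ 2) :=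
    (Real.sqrt_eq_rpow _).symm
  set s := Real.sqrt (ρ ^ 2 + ρ₁ ^ 2) with hs
  have hρs : ρ < s := (Real.lt_sqrt hρ.le).mpr (by nlinarith)
  set θ : ℝ := s / ρ with hθ
  have hθ1 : 1 < θ := (one_lt_div hρ).mpr hρs
  have hθρ : θ * ρ = s := div_mul_cancel₀ _ hρ.ne'
  have hθ2 : θ ^ 2 = 1 + ρ₁ ^ 2 / ρ ^ 2 := by
    rw [hθ, div_pow, hs, Real.sq_sqrt (by positivity)]
    field_simp
  have h := hscal θ hθ1
  rw [hθρ, hθ2] at h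
  rw [hrpow]
  nlinarith
end
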